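/- Let f: A* → A* be a morphism with iterative fixed point w = f^ω(α), and let X be the shift orbit closure of w. For every x ∈ X there exist a letter a ∈ A, a nonempty suffix s of f(a), and y ∈ X such that x = s·f(y) and a·y ∈ X. -/

import Mathlib

/-- A morphism on `A*`, given by its values on letters, extended to words. -/
def morphW {A : Type*} (f : A → List A) (w : List A) : List A := w.flatMap f

/-- The finite word `u` is a prefix of the infinite word `x`. -/
def IsPrefixI {A : Type*} (u : List A) (x : ℕ → A) : Prop :=
  ∀ i, (h : i < u.length) → u.get ⟨i, h⟩ = x i

/-- The finite word `u` is a factor of the infinite word `x`. -/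
def IsFactorI {A : Type*} (u : List A) (x : ℕ → A) : Prop :=
  ∃ k, ∀ i, (h : i < u.length) → u.get ⟨i, h⟩ = x (k + i)

/-- Prepend a letter to an infinite word. -/
def consI {A : Type*} (a : A) (x : ℕ → A) : ℕ → A :=
  fun n => if n = 0 then a else x (n - 1)

/-- `x` is in the shift orbit closure of the infinite word `w`. -/
def InOrbitClosure {A : Type*} (x w : ℕ → A) : Prop :=
  ∀ u : List A, IsFactorI u x → IsFactorI u w

/-- The infinite word `x` equals `s · f(y)`, where `f` is the morphism generated by
`fA` and `y` is an infinite word: every word `s · f(y₀ y₁ ⋯ y_{n-1})` is a prefix of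
`x`, and these words have unbounded length. -/
def EqSuffixImage {A : Type*} (x : ℕ → A) (s : List A) (fA : A → List A)
    (y : ℕ → A) : Prop :=
  (∀ n : ℕ, IsPrefixI (s ++ morphW fA (List.ofFn fun i : Fin n => y i)) x) ∧
  ∀ m : ℕ, ∃ n : ℕ, m < (s ++ morphW fA (List.ofFn fun i : Fin n => y i)).length

section Aux
variable {A : Type*}

lemma isPrefixI_getElem {u : List A} {x : ℕ → A} (hu : IsPrefixI u x) {i : ℕ}
    (h : i < u.length) : u[i] = x i := hu i h

lemma isPrefixI_mono {u v : List A} {x : ℕ → A} (h : v <+: u) (hu : IsPrefixI u x) :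
    IsPrefixI v x := by
  intro i hi
  have h2 : i < u.length := lt_of_lt_of_le hi h.length_le
  have h3 := hu i h2
  simp only [List.get_eq_getElem] at h3 ⊢
  rw [h.getElem hi]
  exact h3

lemma isFactorI_of_infix {u v : List A} {x : ℕ → A} (h : u <:+: v) (hv : IsFactorI v x) :
    IsFactorI u x := by
  obtain ⟨l, r, rfl⟩ := h
  obtain ⟨k, hk⟩ := hv
  refine ⟨k + l.length, fun i hi => ?_⟩
  have h2 : l.length + i < (l ++ u ++ r).length := by
    simp only [List.length_append]; omega
  have h3 := hk (l.length + i) h2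
  simp only [List.get_eq_getElem] at h3 ⊢
  have e1 : (l ++ u ++ r)[l.length + i]'h2 = u[i] := by
    rw [List.getElem_append_left (by simp only [List.length_append]; omega)]
    rw [List.getElem_append_right (by omega)]
    congr 1
    omega
  rw [e1] at h3
  rw [h3]
  congr 1
  omega

lemma isFactorI_of_prefixI {u : List A} {x : ℕ → A} (h : IsPrefixI u x) : IsFactorI u x :=
  ⟨0, fun i hi => by rw [h i hi, Nat.zero_add]⟩

lemma isFactorI_of_infix_prefixI {u L : List A} {x : ℕ → A} (h : u <:+: L)
    (hL : IsPrefixI L x) : IsFactorI u x :=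
  isFactorI_of_infix h (isFactorI_of_prefixI hL)

/-- Extract a list-level occurrence of a factor inside a long enough "prefix list". -/
lemma factor_in_list {u L : List A} {v : ℕ → A} (hL : IsPrefixI L v) {k : ℕ}
    (hk : ∀ i, (h : i < u.length) → u.get ⟨i, h⟩ = v (k + i))
    (hlen : k + u.length ≤ L.length) :
    ∃ l r, l ++ u ++ r = L := by
  refine ⟨L.take k, L.drop (k + u.length), ?_⟩
  have hu : u = (L.drop k).take u.length := by
    apply List.ext_getElem
    · simp only [List.length_take, List.length_drop]; omega
    · intro i h1 h2
      rw [List.getElem_take, List.getElem_drop]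
      have := hk i h1
      simp only [List.get_eq_getElem] at this
      rw [this]
      exact (hL (k + i) (by omega)).symm
  have key : L.take k ++ ((L.drop k).take u.length) ++ L.drop (k + u.length) = L := by
    rw [List.append_assoc]
    have h2 : (L.drop k).take u.length ++ L.drop (k + u.length) = L.drop k := by
      nth_rewrite 2 [← List.take_append_drop u.length (L.drop k)]
      rw [List.drop_drop]
    rw [h2, List.take_append_drop]
  rw [← hu] at key
  exact key

/-- Decomposition of a prefix of a morphic image into full blocks plus a short rest. -/
lemma decomp_prefix (gA : A → List A) (C : ℕ) (hC : ∀ c, (gA c).length ≤ C) :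
    ∀ (q p v : List A), p ++ v = q.flatMap gA →
    ∃ z t, z <+: q ∧ p = z.flatMap gA ++ t ∧ t.length ≤ C := by
  intro q
  induction q with
  | nil =>
    intro p v h
    simp only [List.flatMap_nil, List.append_eq_nil_iff] at h
    exact ⟨[], [], List.nil_prefix, by simp [h.1], Nat.zero_le C⟩
  | cons b q ih =>
    intro p v h
    rw [List.flatMap_cons] at h
    by_cases hle : p.length ≤ (gA b).length
    · exact ⟨[], p, List.nil_prefix, (by simp : p = [].flatMap gA ++ p), le_trans hle (hC b)⟩
    · push_neg at hle
      have hpre : gA b <+: p := by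
        refine List.prefix_of_prefix_length_le ⟨q.flatMap gA, h.symm⟩ ⟨v, rfl⟩ (le_of_lt hle)
      obtain ⟨p', rfl⟩ := hpre
      rw [List.append_assoc] at h
      have h2 : p' ++ v = q.flatMap gA := List.append_cancel_left h
      obtain ⟨z, t, hz, hp, ht⟩ := ih p' v h2
      exact ⟨b :: z, t, List.cons_prefix_cons.mpr ⟨rfl, hz⟩,
        by rw [List.flatMap_cons, List.append_assoc, ← hp], ht⟩

/-- Decomposition of a long factor of a morphic image: a nonempty suffix of a block,
full blocks, and a short rest. -/
lemma decomp_factor (gA : A → List A) (C : ℕ) (hC : ∀ c, (gA c).length ≤ C) :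
    ∀ (q u p v : List A), u ++ p ++ v = q.flatMap gA → C < p.length →
    ∃ a s z t, s ≠ [] ∧ s <:+ gA a ∧ (a :: z) <:+: q ∧
      p = s ++ z.flatMap gA ++ t ∧ t.length ≤ C := by
  intro q
  induction q with
  | nil =>
    intro u p v h hlen
    simp only [List.flatMap_nil, List.append_eq_nil_iff] at h
    rw [h.1.2] at hlen; simp at hlen
  | cons b q ih =>
    intro u p v h hlen
    rw [List.flatMap_cons] at h
    by_cases hle : (gA b).length ≤ u.length
    · have hpre : gA b <+: u := by
        refine List.prefix_of_prefix_length_le ⟨q.flatMap gA, h.symm⟩ ⟨p ++ v, (List.append_assoc u p v).symm⟩ hle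
      obtain ⟨u', rfl⟩ := hpre
      rw [List.append_assoc, List.append_assoc] at h
      have h2 : u' ++ (p ++ v) = q.flatMap gA := List.append_cancel_left h
      rw [← List.append_assoc] at h2
      obtain ⟨a, s, z, t, h1, h2', h3, h4, h5⟩ := ih u' p v h2 hlen
      exact ⟨a, s, z, t, h1, h2', List.infix_cons h3, h4, h5⟩
    · push_neg at hle
      have hupre : u <+: gA b := by
        refine List.prefix_of_prefix_length_le ⟨p ++ v, by
          rw [← List.append_assoc]; exact h⟩ ⟨q.flatMap gA, rfl⟩ (le_of_lt hle)
      set s := (gA b).drop u.length with hs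
      have hgb : gA b = u ++ s := by
        obtain ⟨r, hr⟩ := hupre
        rw [← hr, hs, ← hr, List.drop_left]
      have hsne : s ≠ [] := by
        intro hcon
        have : (gA b).length = u.length := by
          rw [hgb, hcon]; simp
        omega
      have hssuf : s <:+ gA b := by rw [hs]; exact List.drop_suffix _ _
      rw [hgb, List.append_assoc, List.append_assoc] at h
      have h2 : p ++ v = s ++ q.flatMap gA := List.append_cancel_left h
      have hsp : s <+: p := by
        refine List.prefix_of_prefix_length_le ⟨q.flatMap gA, h2.symm⟩ ⟨v, rfl⟩ ?_
        have : s.length ≤ (gA b).length := hssuf.length_le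
        have := hC b
        omega
      obtain ⟨p', rfl⟩ := hsp
      rw [List.append_assoc] at h2
      have h3 : p' ++ v = q.flatMap gA := List.append_cancel_left h2
      obtain ⟨z, t, hz, hp, ht⟩ := decomp_prefix gA C hC q p' v h3
      refine ⟨b, s, z, t, hsne, hssuf, ?_, by rw [hp, List.append_assoc], ht⟩
      exact (List.cons_prefix_cons.mpr ⟨rfl, hz⟩).isInfix

lemma flatMap_length_le (gA : A → List A) (C : ℕ) (hC : ∀ c, (gA c).length ≤ C) :
    ∀ l : List A, (l.flatMap gA).length ≤ C * l.length := by
  intro l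
  induction l with
  | nil => simp
  | cons b l ih =>
    rw [List.flatMap_cons, List.length_append, List.length_cons, Nat.mul_succ]
    have := hC b
    omega

lemma iterate_morphW (fA : A → List A) (k : ℕ) :
    ∀ l : List A, (morphW fA)^[k] l = l.flatMap (fun c => (morphW fA)^[k] [c]) := by
  induction k with
  | zero =>
    intro l; simp only [Function.iterate_zero, id_eq]
    exact (List.flatMap_singleton' l).symm
  | succ k ih =>
    intro l
    rw [Function.iterate_succ_apply, ih (morphW fA l)]
    show (l.flatMap fA).flatMap _ = _
    rw [List.flatMap_assoc]
    congr 1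
    funext c
    rw [Function.iterate_succ_apply]
    have : morphW fA [c] = fA c := by simp [morphW]
    rw [this, ih (fA c)]

lemma iterate_length_le (fA : A → List A) (C : ℕ) (hC : ∀ c, (fA c).length ≤ C) (k : ℕ) :
    ∀ l : List A, ((morphW fA)^[k] l).length ≤ C ^ k * l.length := by
  induction k with
  | zero => intro l; simp
  | succ k ih =>
    intro l
    rw [Function.iterate_succ_apply]
    calc ((morphW fA)^[k] (morphW fA l)).length ≤ C ^ k * (morphW fA l).length := ih _
    _ ≤ C ^ k * (C * l.length) := Nat.mul_le_mul_left _ (flatMap_length_le fA C hC l)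
    _ = C ^ (k + 1) * l.length := by ring

end Aux

section Erase
variable {A : Type*} (fA : A → List A)

/-- `b` dies after `k` applications of the morphism. -/
def Zp (k : ℕ) (b : A) : Prop := (morphW fA)^[k] [b] = []

lemma morphW_single (c : A) : morphW fA [c] = fA c := by simp [morphW]

lemma Zp_succ_iff (k : ℕ) (b : A) : Zp fA (k + 1) b ↔ ∀ c ∈ fA b, Zp fA k c := by
  unfold Zp
  rw [Function.iterate_succ_apply, morphW_single, iterate_morphW fA k (fA b)]
  exact List.flatMap_eq_nil_iff

lemma Zp_mono {k : ℕ} {b : A} (h : Zp fA k b) : Zp fA (k + 1) b := by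
  unfold Zp at h ⊢
  rw [Function.iterate_succ_apply', h]
  rfl

lemma Zp_le {k k' : ℕ} (hk : k ≤ k') {b : A} (h : Zp fA k b) : Zp fA k' b := by
  induction hk with
  | refl => exact h
  | step _ ih => exact Zp_mono fA ih

lemma Zp_vanish {k : ℕ} {l : List A} (h : ∀ b ∈ l, Zp fA k b) :
    (morphW fA)^[k] l = [] := by
  rw [iterate_morphW]
  exact List.flatMap_eq_nil_iff.mpr h

lemma exists_k0 [Fintype A] : ∃ k0, 1 ≤ k0 ∧ ∀ j b, (Zp fA (k0 + j) b ↔ Zp fA k0 b) := by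
  classical
  have hstep : ∀ k, (∀ b, Zp fA (k + 1) b ↔ Zp fA k b) →
      ∀ b, Zp fA (k + 2) b ↔ Zp fA (k + 1) b := by
    intro k hk b
    rw [show k + 2 = (k + 1) + 1 from rfl, Zp_succ_iff, Zp_succ_iff]
    exact forall_congr' fun c => imp_congr_right fun _ => hk c
  have key : ∃ k, ∀ b, Zp fA (k + 1) b → Zp fA k b := by
    by_contra hc
    push_neg at hc
    have hcard : ∀ k, k ≤ (Finset.univ.filter (fun b => Zp fA k b)).card := by
      intro k
      induction k with
      | zero => omega
      | succ k ih =>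
        obtain ⟨b, hb1, hb2⟩ := hc k
        have hss : Finset.univ.filter (fun b => Zp fA k b) ⊂
            Finset.univ.filter (fun b => Zp fA (k + 1) b) := by
          refine (Finset.ssubset_iff_of_subset ?_).mpr ⟨b, ?_, ?_⟩
          · intro c hcm
            simp only [Finset.mem_filter, Finset.mem_univ, true_and] at hcm ⊢
            exact Zp_mono fA hcm
          · simp only [Finset.mem_filter, Finset.mem_univ, true_and]; exact hb1
          · simp only [Finset.mem_filter, Finset.mem_univ, true_and]; exact hb2
        have := Finset.card_lt_card hss
        omega
    have h1 := hcard (Fintype.card A + 1)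
    have h2 : (Finset.univ.filter (fun b => Zp fA (Fintype.card A + 1) b)).card ≤
        Fintype.card A := by
      rw [← Finset.card_univ]; exact Finset.card_le_card (Finset.subset_univ _)
    omega
  obtain ⟨k, hk⟩ := key
  have heq : ∀ b, Zp fA (k + 1) b ↔ Zp fA k b := fun b => ⟨hk b, Zp_mono fA⟩
  have hadj : ∀ j b, Zp fA (k + j + 1) b ↔ Zp fA (k + j) b := by
    intro j
    induction j with
    | zero => exact heq
    | succ j ih => exact hstep (k + j) ih
  have hprop : ∀ j b, Zp fA (k + j) b ↔ Zp fA k b := by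
    intro j
    induction j with
    | zero => intro b; exact Iff.rfl
    | succ j ih => intro b; exact (hadj j b).trans (ih b)
  refine ⟨k + 1, le_refl _ |>.trans (by omega), fun j b => ?_⟩
  have h1 : k + 1 + j = k + (1 + j) := by omega
  rw [h1]
  exact (hprop (1 + j) b).trans (hprop 1 b).symm

lemma window_bound_aux (B : ℕ) : ∀ (N : ℕ) (l : List A), l.length ≤ N →
    (∀ u, u <:+: l → u.length = B + 1 → ∃ b ∈ u, fA b ≠ []) →
    l.length ≤ (B + 1) * ((morphW fA l).length + 1) := by
  intro N
  induction N with
  | zero => intro l h _; exact le_trans h (Nat.zero_le _)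
  | succ N ih =>
    intro l hlen hw
    by_cases hsmall : l.length ≤ B + 1
    · calc l.length ≤ B + 1 := hsmall
        _ = (B + 1) * 1 := (mul_one _).symm
        _ ≤ _ := Nat.mul_le_mul_left _ (by omega)
    · push_neg at hsmall
      have hul : (l.take (B + 1)).length = B + 1 := by
        rw [List.length_take]; omega
      obtain ⟨b, hbu, hbne⟩ := hw (l.take (B + 1)) (List.take_prefix _ _).isInfix hul
      have hfu : 1 ≤ (morphW fA (l.take (B + 1))).length := by
        rcases Nat.eq_zero_or_pos (morphW fA (l.take (B + 1))).length with h0 | h1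
        · exfalso
          have h2 : morphW fA (l.take (B + 1)) = [] := List.length_eq_zero_iff.mp h0
          exact hbne (List.flatMap_eq_nil_iff.mp h2 b hbu)
        · exact h1
      have hdw : ∀ v, v <:+: l.drop (B + 1) → v.length = B + 1 → ∃ b ∈ v, fA b ≠ [] :=
        fun v hv hvl => hw v (hv.trans (List.drop_suffix _ _).isInfix) hvl
      have hdlen : (l.drop (B + 1)).length ≤ N := by rw [List.length_drop]; omega
      have ihd := ih (l.drop (B + 1)) hdlen hdw
      have hsplit : (morphW fA l).length =
          (morphW fA (l.take (B + 1))).length + (morphW fA (l.drop (B + 1))).length := by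
        have h2 : morphW fA l = morphW fA (l.take (B + 1)) ++ morphW fA (l.drop (B + 1)) := by
          conv_lhs => rw [show l = l.take (B + 1) ++ l.drop (B + 1) from
            (List.take_append_drop _ _).symm]
          exact List.flatMap_append
        rw [h2, List.length_append]
      have hlsplit : l.length = (B + 1) + (l.drop (B + 1)).length := by
        rw [List.length_drop]; omega
      rw [hlsplit, hsplit]
      calc (B + 1) + (l.drop (B + 1)).length
          ≤ (B + 1) + (B + 1) * ((morphW fA (l.drop (B + 1))).length + 1) := by omega
        _ = (B + 1) * ((morphW fA (l.drop (B + 1))).length + 2) := by ring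
        _ ≤ (B + 1) * ((morphW fA (l.take (B + 1))).length +
              (morphW fA (l.drop (B + 1))).length + 1) :=
            Nat.mul_le_mul_left _ (by omega)

end Erase


theorem morphic_suffix_decomposition {A : Type*} [Fintype A]
    (fA : A → List A) (α : A) (w : ℕ → A)
    (hfix : ∀ n, IsPrefixI ((morphW fA)^[n] [α]) w)
    (hgrow : ∀ m, ∃ n, m < ((morphW fA)^[n] [α]).length)
    (x : ℕ → A) (hx : InOrbitClosure x w) :
    ∃ (a : A) (s : List A) (y : ℕ → A),
      s ≠ [] ∧ s <:+ fA a ∧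
      EqSuffixImage x s fA y ∧
      InOrbitClosure y w ∧
      InOrbitClosure (consI a y) w := by

  classical
  obtain ⟨k0, hk01, hk0s⟩ := exists_k0 fA
  set C : ℕ := max (Finset.univ.sup fun c => (fA c).length) 2 with hCdef
  have hCb : ∀ c, (fA c).length ≤ C := by
    intro c
    rw [hCdef]
    have h1 : (fA c).length ≤ Finset.univ.sup (fun c => (fA c).length) :=
      Finset.le_sup (f := fun c => (fA c).length) (Finset.mem_univ c)
    exact le_trans h1 le_sup_left
  have hC2 : 2 ≤ C := by rw [hCdef]; exact le_sup_right
  -- arbitrarily long iterates with a lower bound on the exponent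
  have hbig : ∀ (j M : ℕ), ∃ n, j ≤ n ∧ M < ((morphW fA)^[n] [α]).length := by
    intro j M
    obtain ⟨n, hn⟩ := hgrow (max M (C ^ j))
    refine ⟨n, ?_, lt_of_le_of_lt (le_max_left _ _) hn⟩
    have h1 : ((morphW fA)^[n] [α]).length ≤ C ^ n := by
      have := iterate_length_le fA C hCb n [α]
      simpa using this
    have h2 : C ^ j < C ^ n := lt_of_le_of_lt (le_max_right M _) (lt_of_lt_of_le hn h1)
    exact le_of_lt ((Nat.pow_lt_pow_iff_right (by omega)).mp h2)
  -- every factor of w occurs in some long iterate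
  have hocc : ∀ (j : ℕ) (p : List A), IsFactorI p w →
      ∃ n l r, j ≤ n ∧ l ++ p ++ r = (morphW fA)^[n] [α] := by
    intro j p hp
    obtain ⟨k, hk⟩ := hp
    obtain ⟨n, hjn, hlen⟩ := hbig j (k + p.length)
    obtain ⟨l, r, hlr⟩ := factor_in_list (hfix n) hk (le_of_lt hlen)
    exact ⟨n, l, r, hjn, hlr⟩
  -- bound on runs of erased letters in w
  set B : ℕ := 2 * C ^ k0 + 1 with hBdef
  have hrun : ∀ p : List A, IsFactorI p w → (∀ b ∈ p, fA b = []) → p.length ≤ B := by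
    intro p hp hall
    by_contra hcon
    push_neg at hcon
    obtain ⟨n, l, r, hk0n, hlr⟩ := hocc k0 p hp
    have hqe : (morphW fA)^[n] [α] =
        ((morphW fA)^[n - k0] [α]).flatMap (fun c => (morphW fA)^[k0] [c]) := by
      rw [← iterate_morphW, ← Function.iterate_add_apply]
      congr 1
      omega
    have hCg : ∀ c, ((morphW fA)^[k0] [c]).length ≤ C ^ k0 := by
      intro c
      have := iterate_length_le fA C hCb k0 [c]
      simpa using this
    have hCpos : 0 < C ^ k0 := Nat.pow_pos (by omega)
    have hClt : C ^ k0 < p.length := by omega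
    obtain ⟨a, s, z, t, hs, hsuf, hinf, hpe, ht⟩ :=
      decomp_factor (fun c => (morphW fA)^[k0] [c]) (C ^ k0) hCg _ l p r
        (by rw [hlr, hqe]) hClt
    have hsl : s.length ≤ C ^ k0 := le_trans hsuf.length_le (hCg a)
    have hlen2 : 0 < (z.flatMap (fun c => (morphW fA)^[k0] [c])).length := by
      have := congrArg List.length hpe
      simp only [List.length_append] at this
      omega
    obtain ⟨c, hcz, hcne⟩ : ∃ c ∈ z, (morphW fA)^[k0] [c] ≠ [] := by
      by_contra h0
      push_neg at h0
      rw [List.flatMap_eq_nil_iff.mpr h0] at hlen2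
      simp at hlen2
    have hdZ : ∀ d ∈ (morphW fA)^[k0] [c], Zp fA k0 d := by
      intro d hd
      have hdp : d ∈ p := by
        rw [hpe]
        exact List.mem_append.mpr (Or.inl (List.mem_append.mpr
          (Or.inr (List.mem_flatMap.mpr ⟨c, hcz, hd⟩))))
      have h1 : Zp fA 1 d := by
        show (morphW fA)^[1] [d] = []
        rw [Function.iterate_one, morphW_single]
        exact hall d hdp
      exact Zp_le fA hk01 h1
    have hvan : (morphW fA)^[k0] ((morphW fA)^[k0] [c]) = [] := Zp_vanish fA hdZ
    have hZ2 : Zp fA (k0 + k0) c := by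
      show (morphW fA)^[k0 + k0] [c] = []
      rw [Function.iterate_add_apply]
      exact hvan
    exact hcne ((hk0s k0 c).mp hZ2)
  -- Step A: arbitrarily long decompositions of prefixes of x
  have hstepA : ∀ m, ∃ (a : A) (s z : List A), s ≠ [] ∧ s <:+ fA a ∧
      IsPrefixI (s ++ morphW fA z) x ∧ m < (s ++ morphW fA z).length ∧
      IsFactorI (a :: z) w := by
    intro m
    have hpfx : IsPrefixI (List.ofFn fun i : Fin (m + C + 1) => x i) x := by
      intro i hi
      simp only [List.get_eq_getElem, List.getElem_ofFn]
    have hpw := hx _ (isFactorI_of_prefixI hpfx)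
    obtain ⟨n, l, r, hn1, hlr⟩ := hocc 1 _ hpw
    have hqe : (morphW fA)^[n] [α] = ((morphW fA)^[n - 1] [α]).flatMap fA := by
      conv_lhs => rw [show n = (n - 1) + 1 by omega]
      rw [Function.iterate_succ_apply' (morphW fA) (n - 1) [α]]
      rfl
    have hClt : C < (List.ofFn fun i : Fin (m + C + 1) => x i).length := by
      rw [List.length_ofFn]; omega
    obtain ⟨a, s, z, t, hs, hsuf, hinf, hpe, ht⟩ :=
      decomp_factor fA C hCb _ l _ r (by rw [hlr, hqe]) hClt
    refine ⟨a, s, z, hs, hsuf, ?_, ?_, ?_⟩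
    · refine isPrefixI_mono ⟨t, ?_⟩ hpfx
      exact hpe.symm
    · have hle := congrArg List.length hpe
      simp only [List.length_append, List.length_ofFn] at hle
      rw [List.length_append]
      show m < s.length + (z.flatMap fA).length
      omega
    · exact isFactorI_of_infix_prefixI hinf (hfix (n - 1))
  -- Pigeonhole: fix the letter a and the suffix s
  choose aF sF zF hF1 hF2 hF3 hF4 hF5 using hstepA
  have hltF : ∀ m, (sF m).length < C + 1 :=
    fun m => Nat.lt_succ_of_le (le_trans (hF2 m).length_le (hCb (aF m)))
  set g : ℕ → A × Fin (C + 1) := fun m => (aF m, ⟨(sF m).length, hltF m⟩) with hgdef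
  obtain ⟨pr, hfib⟩ := Finite.exists_infinite_fiber g
  obtain ⟨a, kk⟩ := pr
  have hinfset : (g ⁻¹' {(a, kk)}).Infinite := Set.infinite_coe_iff.mp hfib
  have hfa : ∀ m, g m = (a, kk) → aF m = a ∧
      sF m = (fA a).drop ((fA a).length - kk.1) := by
    intro m hm
    have h1 : aF m = a := congrArg Prod.fst hm
    have h2 : (sF m).length = kk.1 := congrArg (fun p : A × Fin (C + 1) => p.2.1) hm
    have h3 := List.suffix_iff_eq_drop.mp (hF2 m)
    rw [h1, h2] at h3
    exact ⟨h1, h3⟩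
  set s : List A := (fA a).drop ((fA a).length - kk.1) with hsdef
  obtain ⟨m0, hm0⟩ := hinfset.nonempty
  have hg0 : g m0 = (a, kk) := hm0
  have hsne : s ≠ [] := by rw [← (hfa m0 hg0).2]; exact hF1 m0
  have hssuf : s <:+ fA a := List.drop_suffix _ _
  have hAS : ∀ m, ∃ z, IsPrefixI (s ++ morphW fA z) x ∧
      m < (s ++ morphW fA z).length ∧ IsFactorI (a :: z) w := by
    intro m
    obtain ⟨m', hm', hlt⟩ := hinfset.exists_gt m
    obtain ⟨ha', hs'⟩ := hfa m' hm'
    refine ⟨zF m', ?_, ?_, ?_⟩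
    · rw [← hs']; exact hF3 m'
    · rw [← hs']; exact lt_trans hlt (hF4 m')
    · rw [← ha']; exact hF5 m'
  -- Koenig's lemma: build the infinite word y
  set P : List A → Prop := fun yc => ∀ m, ∃ z, yc <+: z ∧
      IsPrefixI (s ++ morphW fA z) x ∧ m < (s ++ morphW fA z).length ∧
      IsFactorI (a :: z) w with hPdef
  have hP0 : P [] := by
    intro m
    obtain ⟨z, h1, h2, h3⟩ := hAS m
    exact ⟨z, List.nil_prefix, h1, h2, h3⟩
  have hPstep : ∀ yc, P yc → ∃ b, P (yc ++ [b]) := by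
    intro yc hyc
    by_contra hcon
    push_neg at hcon
    have hcon' : ∀ b : A, ∃ mb : ℕ, ∀ z, ¬(yc ++ [b] <+: z ∧
        IsPrefixI (s ++ morphW fA z) x ∧ mb < (s ++ morphW fA z).length ∧
        IsFactorI (a :: z) w) := by
      intro b
      obtain ⟨mb, hmb⟩ := not_forall.mp (hcon b)
      exact ⟨mb, not_exists.mp hmb⟩
    choose Mb hMb using hcon'
    obtain ⟨z, hz1, hz2, hz3, hz4⟩ :=
      hyc (max (Finset.univ.sup Mb) (s ++ morphW fA yc).length)
    obtain ⟨r, rfl⟩ := hz1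
    have hrne : r ≠ [] := by
      rintro rfl
      rw [List.append_nil] at hz3
      have := le_max_right (Finset.univ.sup Mb) (s ++ morphW fA yc).length
      omega
    obtain ⟨b, r', rfl⟩ := List.exists_cons_of_ne_nil hrne
    refine hMb b (yc ++ b :: r') ⟨⟨r', by simp⟩, hz2, ?_, hz4⟩
    have h1 : Mb b ≤ Finset.univ.sup Mb := Finset.le_sup (Finset.mem_univ b)
    have h2 := le_max_left (Finset.univ.sup Mb) (s ++ morphW fA yc).length
    omega
  choose stepb hstepb using hPstep
  set Y : ℕ → {l : List A // P l} := fun n => Nat.rec ⟨[], hP0⟩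
    (fun _ p => ⟨p.1 ++ [stepb p.1 p.2], hstepb p.1 p.2⟩) n with hYdef
  have hYsucc : ∀ n, (Y (n + 1)).1 = (Y n).1 ++ [stepb (Y n).1 (Y n).2] := fun n => rfl
  have hYlen : ∀ n, (Y n).1.length = n := by
    intro n
    induction n with
    | zero => rfl
    | succ n ih => rw [hYsucc, List.length_append, ih]; rfl
  set y : ℕ → A := fun i => stepb (Y i).1 (Y i).2 with hydef
  have hofFn : ∀ n, (List.ofFn fun i : Fin n => y i) = (Y n).1 := by
    intro n
    induction n with
    | zero => rfl
    | succ n ih =>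
      calc (List.ofFn fun i : Fin (n + 1) => y i)
          = (List.ofFn fun i : Fin n => y i) ++ [y n] := by
            rw [List.ofFn_succ', List.concat_eq_append]
            simp only [Fin.coe_castSucc, Fin.val_last]
        _ = (Y n).1 ++ [y n] := by rw [ih]
        _ = (Y (n + 1)).1 := (hYsucc n).symm
  have hPY : ∀ n, P (Y n).1 := fun n => (Y n).2
  have hfacY : ∀ n, IsFactorI (a :: (Y n).1) w := by
    intro n
    obtain ⟨z, hz1, _, _, hz4⟩ := hPY n 0
    obtain ⟨r, rfl⟩ := hz1
    exact isFactorI_of_infix ⟨[], r, by simp⟩ hz4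
  have hpre : ∀ n, IsPrefixI (s ++ morphW fA (List.ofFn fun i : Fin n => y i)) x := by
    intro n
    rw [hofFn n]
    obtain ⟨z, hz1, hz2, _, _⟩ := hPY n 0
    obtain ⟨r, rfl⟩ := hz1
    refine isPrefixI_mono ⟨morphW fA r, ?_⟩ hz2
    rw [List.append_assoc]
    congr 1
    exact (List.flatMap_append).symm
  have hwin : ∀ n, (Y n).1.length ≤ (B + 1) * ((morphW fA (Y n).1).length + 1) := by
    intro n
    refine window_bound_aux fA B (Y n).1.length (Y n).1 le_rfl ?_
    intro u hu hul
    by_contra h0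
    push_neg at h0
    have hufac : IsFactorI u w := isFactorI_of_infix (List.infix_cons hu) (hfacY n)
    have := hrun u hufac h0
    omega
  have hunb : ∀ m, ∃ n, m < (s ++ morphW fA (List.ofFn fun i : Fin n => y i)).length := by
    intro m
    refine ⟨(B + 1) * (m + 2), ?_⟩
    rw [hofFn, List.length_append]
    have h1 := hwin ((B + 1) * (m + 2))
    rw [hYlen] at h1
    have h2 : m + 2 ≤ (morphW fA (Y ((B + 1) * (m + 2))).1).length + 1 := by
      by_contra h3
      push_neg at h3
      have h4 : (B + 1) * ((morphW fA (Y ((B + 1) * (m + 2))).1).length + 1)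
          ≤ (B + 1) * (m + 1) := Nat.mul_le_mul_left _ (by omega)
      have he : (B + 1) * (m + 2) = (B + 1) * (m + 1) + (B + 1) := by ring
      omega
    omega
  have hYpre : ∀ N, IsPrefixI (a :: (Y N).1) (consI a y) := by
    intro N j hj
    simp only [List.get_eq_getElem]
    match j with
    | 0 => simp [consI]
    | j + 1 =>
      have hj' : j < (Y N).1.length := by
        simp only [List.length_cons] at hj
        omega
      rw [List.getElem_cons_succ]
      simp only [← hofFn N, List.getElem_ofFn]
      simp [consI]
  have hconsorb : InOrbitClosure (consI a y) w := by
    intro u hu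
    obtain ⟨k, hk⟩ := hu
    obtain ⟨l, r, hlr⟩ := factor_in_list (hYpre (k + u.length)) hk
      (by rw [List.length_cons, hYlen]; omega)
    exact isFactorI_of_infix ⟨l, r, hlr⟩ (hfacY (k + u.length))
  have hyorb : InOrbitClosure y w := by
    intro u hu
    obtain ⟨k, hk⟩ := hu
    refine hconsorb u ⟨k + 1, fun i hi => ?_⟩
    rw [hk i hi]
    simp only [consI]
    rw [if_neg (by omega)]
    congr 1
    omega
  exact ⟨a, s, y, hsne, hssuf, ⟨hpre, hunb⟩, hyorb, hconsorb⟩
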